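/- arXiv:1802.09446 — 3 statements merged into one kernel-verified Lean document; each statement's English description precedes it below -/
import Mathlib

section
/- Let ν ≥ 1 be a real number and k ≥ 1 an integer. For all real numbers 0 ≤ v_1 ≤ v_2 ≤ ... ≤ v_k, one has (∑_{j=1}^k v_j)^ν ≥ ∑_{j=1}^k v_j^ν · [(k-j+1)^ν - (k-j)^ν]. -/
open Finset Real

/-- Convexity increment lemma: for `0 ≤ a ≤ b`, `0 ≤ d`, `1 ≤ ν`,
`(a+d)^ν - a^ν ≤ (b+d)^ν - b^ν`. -/
lemma rpow_increment {ν : ℝ} (hν : 1 ≤ ν) {a b d : ℝ} (ha : 0 ≤ a) (hab : a ≤ b)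
    (hd : 0 ≤ d) : (a + d) ^ ν - a ^ ν ≤ (b + d) ^ ν - b ^ ν := by
  rcases eq_or_lt_of_le hd with rfl | hd'
  · simp
  rcases eq_or_lt_of_le hab with rfl | hab'
  · exact le_refl _
  have hb : (0:ℝ) ≤ b := ha.trans hab
  have hf := convexOn_rpow hν
  have h1 : ((a+d)^ν - a^ν) / ((a+d) - a) ≤ ((b+d)^ν - a^ν) / ((b+d) - a) :=
    hf.secant_mono (Set.mem_Ici.mpr ha) (Set.mem_Ici.mpr (add_nonneg ha hd))
      (Set.mem_Ici.mpr (add_nonneg hb hd)) (by linarith) (by linarith) (by linarith)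
  have h2 : (a^ν - (b+d)^ν) / (a - (b+d)) ≤ (b^ν - (b+d)^ν) / (b - (b+d)) :=
    hf.secant_mono (Set.mem_Ici.mpr (add_nonneg hb hd)) (Set.mem_Ici.mpr ha)
      (Set.mem_Ici.mpr hb) (by linarith) (by linarith) hab
  have e1 : ((b+d)^ν - a^ν) / ((b+d) - a) = (a^ν - (b+d)^ν) / (a - (b+d)) := by
    rw [← neg_div_neg_eq]; ring_nf
  have e2 : (b^ν - (b+d)^ν) / (b - (b+d)) = ((b+d)^ν - b^ν) / d := by
    rw [← neg_div_neg_eq]; ring_nf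
  have h3 : ((a+d)^ν - a^ν) / d ≤ ((b+d)^ν - b^ν) / d := by
    calc ((a+d)^ν - a^ν) / d = ((a+d)^ν - a^ν) / ((a+d) - a) := by ring_nf
      _ ≤ ((b+d)^ν - a^ν) / ((b+d) - a) := h1
      _ = (a^ν - (b+d)^ν) / (a - (b+d)) := e1
      _ ≤ (b^ν - (b+d)^ν) / (b - (b+d)) := h2
      _ = ((b+d)^ν - b^ν) / d := e2
  exact (div_le_div_iff_of_pos_right hd').mp h3

lemma key_rpow_ineq {ν : ℝ} (hν : 1 ≤ ν) :
    ∀ (n : ℕ) (v : ℕ → ℝ), (∀ i, 0 ≤ v i) → (∀ i j, i ≤ j → v i ≤ v j) →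
    ∑ i ∈ Finset.range n, v i ^ ν * (((n - i : ℕ) : ℝ) ^ ν - ((n - i - 1 : ℕ) : ℝ) ^ ν)
      ≤ (∑ i ∈ Finset.range n, v i) ^ ν := by
  intro n
  induction n with
  | zero => intro v _ _; simp [Real.rpow_nonneg]
  | succ n ih =>
    intro v hv hmono
    have hv0 : 0 ≤ v 0 := hv 0
    set S : ℝ := ∑ i ∈ Finset.range n, v (i + 1) with hS
    have hIH := ih (fun i => v (i + 1)) (fun i => hv (i + 1))
      (fun i j hij => hmono (i+1) (j+1) (by omega))
    have hSnn : 0 ≤ S := Finset.sum_nonneg fun i _ => hv (i + 1)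
    have hSge : (n : ℝ) * v 0 ≤ S := by
      calc (n : ℝ) * v 0 = ∑ _i ∈ Finset.range n, v 0 := by
            rw [Finset.sum_const, Finset.card_range, nsmul_eq_mul]
        _ ≤ S := Finset.sum_le_sum fun i _ => hmono 0 (i+1) (by omega)
    have hinc : ((n : ℝ) * v 0 + v 0) ^ ν - ((n : ℝ) * v 0) ^ ν ≤ (S + v 0) ^ ν - S ^ ν :=
      rpow_increment hν (by positivity) hSge hv0
    have hmul1 : ((n : ℝ) * v 0 + v 0) ^ ν = ((n + 1 : ℕ) : ℝ) ^ ν * v 0 ^ ν := by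
      have : (n : ℝ) * v 0 + v 0 = ((n + 1 : ℕ) : ℝ) * v 0 := by push_cast; ring
      rw [this, Real.mul_rpow (by positivity) hv0]
    have hmul2 : ((n : ℝ) * v 0) ^ ν = ((n : ℕ) : ℝ) ^ ν * v 0 ^ ν := by
      rw [Real.mul_rpow (by positivity) hv0]
    rw [Finset.sum_range_succ' (fun i => v i ^ ν *
        (((n + 1 - i : ℕ) : ℝ) ^ ν - ((n + 1 - i - 1 : ℕ) : ℝ) ^ ν)),
      Finset.sum_range_succ' v]
    have hcoe : ∀ i ∈ Finset.range n,
        v (i+1) ^ ν * (((n + 1 - (i+1) : ℕ) : ℝ) ^ ν - ((n + 1 - (i+1) - 1 : ℕ) : ℝ) ^ ν)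
        = v (i+1) ^ ν * (((n - i : ℕ) : ℝ) ^ ν - ((n - i - 1 : ℕ) : ℝ) ^ ν) := by
      intro i _
      have e1 : n + 1 - (i+1) = n - i := by omega
      have e2 : n + 1 - (i+1) - 1 = n - i - 1 := by omega
      rw [e1]
    rw [Finset.sum_congr rfl hcoe]
    have hlast : v 0 ^ ν * (((n + 1 - 0 : ℕ) : ℝ) ^ ν - ((n + 1 - 0 - 1 : ℕ) : ℝ) ^ ν)
        = v 0 ^ ν * (((n + 1 : ℕ) : ℝ) ^ ν - ((n : ℕ) : ℝ) ^ ν) := by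
      norm_num
    rw [hlast]
    calc (∑ i ∈ Finset.range n, v (i+1) ^ ν * (((n - i : ℕ) : ℝ) ^ ν - ((n - i - 1 : ℕ) : ℝ) ^ ν))
          + v 0 ^ ν * (((n + 1 : ℕ) : ℝ) ^ ν - ((n : ℕ) : ℝ) ^ ν)
        ≤ S ^ ν + v 0 ^ ν * (((n + 1 : ℕ) : ℝ) ^ ν - ((n : ℕ) : ℝ) ^ ν) := by
          exact add_le_add_left hIH _
      _ ≤ (S + v 0) ^ ν := by nlinarith [hinc, hmul1, hmul2]

/-- For real `ν ≥ 1`, `k ≥ 1` and `0 ≤ v_1 ≤ … ≤ v_k`,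
`(∑ v_j)^ν ≥ ∑ v_j^ν [(k-j+1)^ν - (k-j)^ν]`. -/
theorem stmt_3 (k : ℕ) (hk : 1 ≤ k) (ν : ℝ) (hν : 1 ≤ ν)
    (v : Fin k → ℝ) (h0 : ∀ i, 0 ≤ v i) (hm : Monotone v) :
    ∑ i : Fin k, v i ^ ν * (((k - (i : ℕ) : ℕ) : ℝ) ^ ν - ((k - (i : ℕ) - 1 : ℕ) : ℝ) ^ ν)
      ≤ (∑ i : Fin k, v i) ^ ν := by
  set w : ℕ → ℝ := fun i => if h : i < k then v ⟨i, h⟩ else v ⟨k - 1, by omega⟩ with hw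
  have hw0 : ∀ i, 0 ≤ w i := by
    intro i; simp only [hw]; split <;> apply h0
  have hwm : ∀ i j, i ≤ j → w i ≤ w j := by
    intro i j hij; simp only [hw]
    split <;> split
    · exact hm (by simpa using hij)
    · exact hm (by simp; omega)
    · omega
    · exact le_refl _
  have h1 : ∑ i : Fin k, v i ^ ν * (((k - (i : ℕ) : ℕ) : ℝ) ^ ν - ((k - (i : ℕ) - 1 : ℕ) : ℝ) ^ ν)
      = ∑ i ∈ Finset.range k, w i ^ ν * (((k - i : ℕ) : ℝ) ^ ν - ((k - i - 1 : ℕ) : ℝ) ^ ν) := by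
    rw [Finset.sum_range fun i => w i ^ ν * (((k - i : ℕ) : ℝ) ^ ν - ((k - i - 1 : ℕ) : ℝ) ^ ν)]
    apply Finset.sum_congr rfl
    intro i _
    simp only [hw, i.isLt, dif_pos, Fin.eta]
  have h2 : ∑ i : Fin k, v i = ∑ i ∈ Finset.range k, w i := by
    rw [Finset.sum_range w]
    apply Finset.sum_congr rfl
    intro i _
    simp only [hw, i.isLt, dif_pos, Fin.eta]
  rw [h1, h2]
  exact key_rpow_ineq hν k w hw0 hwm
end

section
/- Let U_1 ≤ ... ≤ U_k be the k smallest order statistics of n-1 i.i.d. uniform random variables on [0,1], with 1 ≤ k ≤ n-1. For 0 < λ < k and S > 0, P{ (1/k)∑_{j=1}^k log(1/U_j) > S } ≤ e^{-λS} / (1-λ/k)^{k-1} · Γ(n)Γ(k-λ) / (Γ(n-λ)Γ(k)). -/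
open MeasureTheory

/-- The `j`-th smallest value of `x : Fin m → ℝ` (0-indexed). -/
noncomputable def orderStat {m : ℕ} (x : Fin m → ℝ) (j : Fin m) : ℝ :=
  (Multiset.sort (Multiset.map x Finset.univ.val) (· ≤ ·)).get
    (Fin.cast (by simp) j)

section Aux
open Real Set
open scoped ENNReal

namespace S13


noncomputable def mu1 : Measure ℝ := volume.restrict (Set.Icc 0 1)

instance : IsProbabilityMeasure mu1 := by
  constructor
  simp [mu1, Real.volume_Icc]

noncomputable def wt (k : ℕ) (a : ℝ) (i : ℕ) : ℝ := if i < k then -a else 0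

noncomputable def core (m k : ℕ) (a : ℝ) (y : Fin m → ℝ) : ℝ≥0∞ :=
  ∏ i : Fin m, ENNReal.ofReal (y i) ^ (wt k a i.val)

lemma measurable_core (m k : ℕ) (a : ℝ) : Measurable (core m k a) :=
  Finset.measurable_prod _ fun i _ =>
    ((measurable_pi_apply i).ennreal_ofReal).pow_const _

def SMset (r : ℕ) (t : ℝ) : Set (Fin r → ℝ) := {y | StrictMono y ∧ ∀ i, y i < t}

lemma measurableSet_strictMono (r : ℕ) : MeasurableSet {y : Fin r → ℝ | StrictMono y} := by
  have : {y : Fin r → ℝ | StrictMono y} =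
      ⋂ i, ⋂ j, ⋂ (_ : i < j), {y : Fin r → ℝ | y i < y j} := by
    ext y
    simp only [Set.mem_setOf_eq, Set.mem_iInter]
    exact ⟨fun h i j hij => h hij, fun h i j hij => h i j hij⟩
  rw [this]
  exact MeasurableSet.iInter fun i => MeasurableSet.iInter fun j => MeasurableSet.iInter
    fun _ => measurableSet_lt (measurable_pi_apply i) (measurable_pi_apply j)

lemma measurableSet_SMset (r : ℕ) (t : ℝ) : MeasurableSet (SMset r t) := by
  have : SMset r t = {y : Fin r → ℝ | StrictMono y} ∩ ⋂ i, {y : Fin r → ℝ | y i < t} := by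
    ext y; simp [SMset]
  rw [this]
  exact (measurableSet_strictMono r).inter <| MeasurableSet.iInter fun i =>
    measurableSet_lt (measurable_pi_apply i) measurable_const

noncomputable def Fint (r k : ℕ) (a t : ℝ) : ℝ≥0∞ :=
  ∫⁻ y, Set.indicator (SMset r t) (core r k a) y ∂(Measure.pi fun _ : Fin r => mu1)

lemma snoc_mem_SMset_iff {r : ℕ} (z : Fin r → ℝ) (s t : ℝ) :
    Fin.snoc z s ∈ SMset (r+1) t ↔ (s < t ∧ z ∈ SMset r s) := by
  constructor
  · rintro ⟨h1, h2⟩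
    refine ⟨by simpa [Fin.snoc_last] using h2 (Fin.last r), ?_, fun i => ?_⟩
    · intro i j hij
      have := h1 (Fin.castSucc_lt_castSucc_iff.mpr hij)
      simpa [Fin.snoc_castSucc] using this
    · have := h1 (Fin.castSucc_lt_last i)
      simpa [Fin.snoc_castSucc, Fin.snoc_last] using this
  · rintro ⟨hst, hz1, hz2⟩
    constructor
    · intro i j hij
      rcases Fin.eq_castSucc_or_eq_last j with ⟨j', rfl⟩ | rfl
      · have hij' : i < Fin.castSucc j' := hij
        rcases Fin.eq_castSucc_or_eq_last i with ⟨i', rfl⟩ | rfl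
        · have : i' < j' := Fin.castSucc_lt_castSucc_iff.mp hij
          simpa [Fin.snoc_castSucc] using hz1 this
        · exfalso; simp [Fin.lt_iff_val_lt_val] at hij; omega
      · rcases Fin.eq_castSucc_or_eq_last i with ⟨i', rfl⟩ | rfl
        · simpa [Fin.snoc_castSucc, Fin.snoc_last] using hz2 i'
        · exact absurd hij (lt_irrefl _)
    · intro i
      rcases Fin.eq_castSucc_or_eq_last i with ⟨i', rfl⟩ | rfl
      · simp only [Fin.snoc_castSucc]
        exact (hz2 i').trans hst
      · simpa [Fin.snoc_last] using hst

lemma core_snoc {r k : ℕ} (a : ℝ) (z : Fin r → ℝ) (s : ℝ) :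
    core (r+1) k a (Fin.snoc z s) = ENNReal.ofReal s ^ wt k a r * core r k a z := by
  simp only [core]
  rw [Fin.prod_univ_castSucc]
  simp only [Fin.snoc_castSucc, Fin.snoc_last, Fin.val_last, Fin.coe_castSucc]
  rw [mul_comm]

lemma Fint_succ (r k : ℕ) (a t : ℝ) :
    Fint (r+1) k a t = ∫⁻ s, (ENNReal.ofReal s ^ wt k a r) * Set.indicator (Set.Iio t) 1 s *
      Fint r k a s ∂mu1 := by
  have hmp := measurePreserving_piFinSuccAbove (fun _ : Fin (r+1) => mu1) (Fin.last r)
  set e := MeasurableEquiv.piFinSuccAbove (fun _ : Fin (r+1) => ℝ) (Fin.last r) with he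
  set F : (Fin (r+1) → ℝ) → ℝ≥0∞ := Set.indicator (SMset (r+1) t) (core (r+1) k a) with hF
  set G : ℝ × (Fin r → ℝ) → ℝ≥0∞ := fun p =>
    (ENNReal.ofReal p.1 ^ wt k a r * Set.indicator (Set.Iio t) 1 p.1) *
      Set.indicator {q : ℝ × (Fin r → ℝ) | q.2 ∈ SMset r q.1} (fun q => core r k a q.2) p with hG
  have hFe : ∀ p : ℝ × (Fin r → ℝ), F (e.symm p) = G p := by
    rintro ⟨s, z⟩
    have hsymm : e.symm (s, z) = Fin.snoc z s := by
      show (Fin.insertNthEquiv (fun _ => ℝ) (Fin.last r)) (s, z) = Fin.snoc z s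
      simp [Fin.insertNthEquiv, Fin.insertNth_last']
    rw [hsymm]
    by_cases h1 : s < t <;> by_cases h2 : z ∈ SMset r s <;>
      simp [hF, hG, Set.indicator_apply, snoc_mem_SMset_iff, h1, h2, core_snoc, mul_comm,
        mul_assoc, mul_left_comm]
  have hFmeas : Measurable F := (measurable_core _ _ _).indicator (measurableSet_SMset _ _)
  have hGmeas : Measurable G := by
    apply Measurable.mul
    · exact ((measurable_fst.ennreal_ofReal).pow_const _).mul
        (measurable_const.indicator measurableSet_Iio |>.comp measurable_fst)
    · apply Measurable.indicator
      · exact (measurable_core _ _ _).comp measurable_snd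
      · have : {q : ℝ × (Fin r → ℝ) | q.2 ∈ SMset r q.1} =
            {q : ℝ × (Fin r → ℝ) | StrictMono q.2} ∩ ⋂ i, {q : ℝ × (Fin r → ℝ) | q.2 i < q.1} := by
          ext q; simp [SMset]
        rw [this]
        refine MeasurableSet.inter ?_ (MeasurableSet.iInter fun i =>
          measurableSet_lt (measurable_snd.eval) measurable_fst)
        exact (measurableSet_strictMono r).preimage measurable_snd
  calc Fint (r+1) k a t = ∫⁻ y, F y ∂(Measure.pi fun _ : Fin (r+1) => mu1) := rfl
    _ = ∫⁻ p, F (e.symm p) ∂(mu1.prod (Measure.pi fun _ : Fin r => mu1)) :=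
        ((MeasurePreserving.symm e hmp).lintegral_comp hFmeas).symm
    _ = ∫⁻ p, G p ∂(mu1.prod (Measure.pi fun _ : Fin r => mu1)) := by
        congr 1; ext p; exact hFe p
    _ = ∫⁻ s, ∫⁻ z, G (s, z) ∂(Measure.pi fun _ : Fin r => mu1) ∂mu1 :=
        lintegral_prod _ hGmeas.aemeasurable
    _ = _ := by
        apply lintegral_congr
        intro s
        have hpt : ∀ z : Fin r → ℝ, ({q : ℝ × (Fin r → ℝ) | q.2 ∈ SMset r q.1}.indicator
            (fun q => core r k a q.2) (s, z)) = (SMset r s).indicator (core r k a) z := by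
          intro z
          by_cases h : z ∈ SMset r s <;> simp [Set.indicator_apply, h]
        calc ∫⁻ z, G (s,z) ∂(Measure.pi fun _ : Fin r => mu1)
            = ∫⁻ z, (ENNReal.ofReal s ^ wt k a r * (Iio t).indicator 1 s) *
              (SMset r s).indicator (core r k a) z ∂(Measure.pi fun _ : Fin r => mu1) := by
              apply lintegral_congr; intro z; simp only [hG]; rw [hpt z]
          _ = _ := by
              rw [lintegral_const_mul _ ((measurable_core r k a).indicator
                (measurableSet_SMset r s))]
              rfl


noncomputable def pexp (k : ℕ) (a : ℝ) (r : ℕ) : ℝ := (r : ℝ) - (min r k : ℕ) * a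

noncomputable def Dden (k : ℕ) (a : ℝ) (r : ℕ) : ℝ := ∏ i ∈ Finset.range r, pexp k a (i+1)

lemma pexp_succ (k : ℕ) (a : ℝ) (r : ℕ) :
    pexp k a (r+1) = pexp k a r + 1 + wt k a r := by
  unfold pexp wt
  by_cases h : r < k
  · rw [if_pos h, min_eq_left h, min_eq_left (by omega)]
    push_cast
    ring
  · rw [if_neg h, min_eq_right (by omega), min_eq_right (by omega)]
    push_cast
    ring

lemma pexp_succ_pos (k : ℕ) (a : ℝ) (ha0 : 0 < a) (ha1 : a < 1) (r : ℕ) :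
    0 < pexp k a (r+1) := by
  unfold pexp
  have h1 : ((min (r+1) k : ℕ) : ℝ) * a ≤ ((r+1 : ℕ) : ℝ) * a := by
    apply mul_le_mul_of_nonneg_right _ ha0.le
    exact_mod_cast Nat.cast_le.mpr (min_le_left _ _)
  have h2 : ((r+1 : ℕ) : ℝ) * a < ((r+1 : ℕ) : ℝ) := by
    have : (0:ℝ) < ((r+1 : ℕ) : ℝ) := by exact_mod_cast Nat.succ_pos r
    nlinarith
  push_cast at *
  linarith

lemma Dden_pos (k : ℕ) (a : ℝ) (ha0 : 0 < a) (ha1 : a < 1) (r : ℕ) :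
    0 < Dden k a r :=
  Finset.prod_pos fun i _ => pexp_succ_pos k a ha0 ha1 i

lemma Fint_zero (k : ℕ) (a t : ℝ) : Fint 0 k a t = 1 := by
  unfold Fint
  have h1 : SMset 0 t = Set.univ := by
    ext y
    simp [SMset]
    exact fun i j hij => absurd hij (by exact i.elim0)
  have h2 : core 0 k a = fun _ => 1 := by
    funext y; simp [core]
  rw [h1, h2, Set.indicator_univ, lintegral_one]
  simp [Measure.pi_univ]

lemma Fint_eval (k : ℕ) (a : ℝ) (ha0 : 0 < a) (ha1 : a < 1) :
    ∀ (r : ℕ) (t : ℝ), 0 < t → t ≤ 1 →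
      Fint r k a t = ENNReal.ofReal (t ^ pexp k a r / Dden k a r) := by
  intro r
  induction r with
  | zero =>
    intro t ht0 ht1
    rw [Fint_zero]
    simp [pexp, Dden, Real.rpow_zero]
  | succ r ih =>
    intro t ht0 ht1
    rw [Fint_succ]
    set b : ℝ := wt k a r + pexp k a r with hb
    have hb1 : b + 1 = pexp k a (r+1) := by rw [pexp_succ]; ring
    have hbpos : 0 < b + 1 := hb1 ▸ pexp_succ_pos k a ha0 ha1 r
    have hbgt : -1 < b := by linarith
    have hDpos : 0 < Dden k a r := Dden_pos k a ha0 ha1 r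
    -- a.e. rewrite of the integrand
    have hae : ∀ᵐ s ∂mu1, (ENNReal.ofReal s ^ wt k a r) * Set.indicator (Set.Iio t) 1 s *
        Fint r k a s = Set.indicator (Set.Ioo 0 t)
          (fun s => ENNReal.ofReal (s ^ b / Dden k a r)) s := by
      have h1 : ∀ᵐ s ∂mu1, s ∈ Set.Icc (0:ℝ) 1 := ae_restrict_mem measurableSet_Icc
      have h2 : ∀ᵐ s ∂mu1, s ≠ 0 := by
        rw [ae_iff]
        have : {s : ℝ | ¬ s ≠ 0} = {0} := by ext s; simp
        rw [this, mu1, Measure.restrict_apply (measurableSet_singleton 0)]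
        exact measure_mono_null Set.inter_subset_left Real.volume_singleton
      filter_upwards [h1, h2] with s hs hs0
      have hs' : 0 < s := lt_of_le_of_ne hs.1 (Ne.symm hs0)
      by_cases hst : s < t
      · have hmem : s ∈ Set.Ioo 0 t := ⟨hs', hst⟩
        rw [Set.indicator_of_mem hmem, Set.indicator_of_mem (Set.mem_Iio.mpr hst),
          ih s hs' hs.2, ENNReal.ofReal_rpow_of_pos hs']
        rw [Pi.one_apply, mul_one, ← ENNReal.ofReal_mul (by positivity)]
        congr 1
        rw [hb, Real.rpow_add hs']
        ring
      · rw [Set.indicator_of_notMem (by simp [Set.mem_Ioo, hst]),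
          Set.indicator_of_notMem (by simp [hst]), mul_zero, zero_mul]
    rw [lintegral_congr_ae hae, lintegral_indicator measurableSet_Ioo]
    have hres : mu1.restrict (Set.Ioo 0 t) = volume.restrict (Set.Ioo 0 t) := by
      rw [mu1, Measure.restrict_restrict measurableSet_Ioo,
        Set.inter_eq_left.mpr (Set.Ioo_subset_Icc_self.trans (Set.Icc_subset_Icc le_rfl ht1))]
    rw [hres]
    have hint : IntegrableOn (fun s : ℝ => s ^ b / Dden k a r) (Set.Ioo 0 t) volume := by
      have := (intervalIntegral.intervalIntegrable_rpow' hbgt (a := 0) (b := t))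
      rw [intervalIntegrable_iff_integrableOn_Ioo_of_le ht0.le] at this
      exact this.div_const _
    rw [← ofReal_integral_eq_lintegral_ofReal hint]
    · congr 1
      rw [← MeasureTheory.integral_Ioc_eq_integral_Ioo, ← intervalIntegral.integral_of_le ht0.le]
      rw [intervalIntegral.integral_div, integral_rpow (Or.inl hbgt)]
      rw [Real.zero_rpow (ne_of_gt hbpos), sub_zero, hb1]
      have hD1 : Dden k a (r+1) = Dden k a r * pexp k a (r+1) := Finset.prod_range_succ _ _
      rw [hD1]
      field_simp
    · filter_upwards [ae_restrict_mem measurableSet_Ioo] with s hs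
      exact div_nonneg (Real.rpow_nonneg hs.1.le _) hDpos.le

lemma mu1_singleton (c : ℝ) : mu1 {c} = 0 := by
  rw [mu1, Measure.restrict_apply (measurableSet_singleton c)]
  exact measure_mono_null Set.inter_subset_left Real.volume_singleton

lemma mu1_compl_Ioo : mu1 ((Set.Ioo (0:ℝ) 1)ᶜ) = 0 := by
  rw [mu1, Measure.restrict_apply (measurableSet_Ioo.compl)]
  have h1 : (Set.Ioo (0:ℝ) 1)ᶜ ∩ Set.Icc 0 1 = Set.Icc (0:ℝ) 1 \ Set.Ioo 0 1 := by
    rw [Set.diff_eq, Set.inter_comm]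
  rw [h1, Set.Icc_diff_Ioo_same (by norm_num : (0:ℝ) ≤ 1), Set.insert_eq]
  exact measure_union_null Real.volume_singleton Real.volume_singleton

lemma null_notIoo (m : ℕ) :
    (Measure.pi fun _ : Fin m => mu1) {x | ∃ i, x i ∉ Set.Ioo (0:ℝ) 1} = 0 := by
  have h : {x : Fin m → ℝ | ∃ i, x i ∉ Set.Ioo (0:ℝ) 1} =
      ⋃ i, Function.eval i ⁻¹' ((Set.Ioo (0:ℝ) 1)ᶜ) := by
    ext x; simp [Function.eval]
  rw [h]
  exact measure_iUnion_null fun i => Measure.pi_eval_preimage_null _ mu1_compl_Ioo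

lemma null_ge_one (m : ℕ) :
    (Measure.pi fun _ : Fin m => mu1) {x | ∃ i, ¬ x i < 1} = 0 := by
  apply measure_mono_null (t := {x : Fin m → ℝ | ∃ i, x i ∉ Set.Ioo (0:ℝ) 1} ∪
      ⋃ i, Function.eval i ⁻¹' ({(1:ℝ)})) ?_ ?_
  · rintro x ⟨i, hi⟩
    by_cases hm : x i ∈ Set.Ioo (0:ℝ) 1
    · exact absurd hm.2 hi
    · exact Or.inl ⟨i, hm⟩
  · exact measure_union_null (null_notIoo m)
      (measure_iUnion_null fun i => Measure.pi_eval_preimage_null _ (mu1_singleton 1))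

lemma null_pair (r : ℕ) (i j : Fin (r+1)) (hij : i ≠ j) :
    (Measure.pi fun _ : Fin (r+1) => mu1) {x | x i = x j} = 0 := by
  set e := MeasurableEquiv.piFinSuccAbove (fun _ : Fin (r+1) => ℝ) i with he
  have hmp := measurePreserving_piFinSuccAbove (fun _ : Fin (r+1) => mu1) i
  obtain ⟨j', hj'⟩ := Fin.exists_succAbove_eq (Ne.symm hij)
  set A : Set (ℝ × (Fin r → ℝ)) := {p | p.1 = p.2 j'} with hA
  have hAm : MeasurableSet A := measurableSet_eq_fun measurable_fst (measurable_snd.eval)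
  have hpre : {x : Fin (r+1) → ℝ | x i = x j} = e ⁻¹' A := by
    ext x
    simp only [Set.mem_preimage, hA, Set.mem_setOf_eq, he,
      MeasurableEquiv.piFinSuccAbove_apply]
    rw [← hj']
    rfl
  rw [hpre, hmp.measure_preimage hAm.nullMeasurableSet]
  rw [Measure.prod_apply hAm]
  have : ∀ s : ℝ, (Measure.pi fun _ : Fin r => mu1) (Prod.mk s ⁻¹' A) = 0 := by
    intro s
    have h1 : Prod.mk s ⁻¹' A = Function.eval j' ⁻¹' ({s} : Set ℝ) := by
      ext z; simp [hA, Function.eval, eq_comm]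
    rw [h1]
    exact Measure.pi_eval_preimage_null _ (mu1_singleton s)
  simp [this]

lemma null_noninj (r : ℕ) :
    (Measure.pi fun _ : Fin (r+1) => mu1) {x | ¬ Function.Injective x} = 0 := by
  apply measure_mono_null (t := ⋃ i, ⋃ j, {x : Fin (r+1) → ℝ | i ≠ j ∧ x i = x j}) ?_ ?_
  · intro x hx
    simp only [Function.Injective, not_forall] at hx
    obtain ⟨i, j, hxij, hij⟩ := hx
    exact Set.mem_iUnion.mpr ⟨i, Set.mem_iUnion.mpr ⟨j, hij, hxij⟩⟩
  · refine measure_iUnion_null fun i => measure_iUnion_null fun j => ?_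
    by_cases hij : i = j
    · have : {x : Fin (r+1) → ℝ | i ≠ j ∧ x i = x j} = ∅ := by
        ext x; simp [hij]
      simp [this]
    · exact measure_mono_null (fun x hx => hx.2) (null_pair r i j hij)


noncomputable def hfun (m k : ℕ) (a : ℝ) (x : Fin m → ℝ) : ℝ≥0∞ :=
  ∑ σ : Equiv.Perm (Fin m),
    Set.indicator {x : Fin m → ℝ | StrictMono (x ∘ σ)} (fun x => core m k a (x ∘ σ)) x

lemma measurable_precomp (m : ℕ) (σ : Equiv.Perm (Fin m)) :
    Measurable (fun x : Fin m → ℝ => x ∘ σ) :=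
  measurable_pi_lambda _ fun i => measurable_pi_apply _

lemma measurable_hfun (m k : ℕ) (a : ℝ) : Measurable (hfun m k a) := by
  apply Finset.measurable_sum
  intro σ _
  exact Measurable.indicator ((measurable_core m k a).comp (measurable_precomp m σ))
    ((measurableSet_strictMono m).preimage (measurable_precomp m σ))

lemma Gval_eq_Fint (m k : ℕ) (a : ℝ) :
    ∫⁻ y, Set.indicator {y : Fin m → ℝ | StrictMono y} (core m k a) y
      ∂(Measure.pi fun _ : Fin m => mu1) = Fint m k a 1 := by
  apply lintegral_congr_ae
  have hnull : ∀ᵐ y ∂(Measure.pi fun _ : Fin m => mu1), ∀ i, y i < 1 := by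
    rw [ae_iff]
    have : {y : Fin m → ℝ | ¬ ∀ i, y i < 1} = {y : Fin m → ℝ | ∃ i, ¬ y i < 1} := by
      ext y; push_neg; simp
    rw [this]
    exact null_ge_one m
  filter_upwards [hnull] with y hy
  by_cases hSM : StrictMono y <;>
    simp [SMset, Set.indicator_apply, hSM, hy]

lemma lintegral_hfun (m k : ℕ) (a : ℝ) :
    ∫⁻ x, hfun m k a x ∂(Measure.pi fun _ : Fin m => mu1) =
      (Nat.factorial m : ℝ≥0∞) * Fint m k a 1 := by
  unfold hfun
  rw [lintegral_finset_sum]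
  · have hterm : ∀ σ : Equiv.Perm (Fin m),
        ∫⁻ x, Set.indicator {x : Fin m → ℝ | StrictMono (x ∘ σ)}
          (fun x => core m k a (x ∘ σ)) x ∂(Measure.pi fun _ : Fin m => mu1) =
        Fint m k a 1 := by
      intro σ
      have hmp := measurePreserving_piCongrLeft (fun _ : Fin m => mu1) (σ : Fin m ≃ Fin m)
      set e := MeasurableEquiv.piCongrLeft (fun _ : Fin m => ℝ) (σ : Fin m ≃ Fin m) with he
      have hF : Measurable (Set.indicator {x : Fin m → ℝ | StrictMono (x ∘ σ)}
          (fun x => core m k a (x ∘ σ))) :=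
        Measurable.indicator ((measurable_core m k a).comp (measurable_precomp m σ))
          ((measurableSet_strictMono m).preimage (measurable_precomp m σ))
      rw [← hmp.lintegral_comp hF]
      rw [← Gval_eq_Fint m k a]
      apply lintegral_congr
      intro y
      have hcomp : (e y) ∘ σ = y := by
        funext i
        show (e y) (σ i) = y i
        rw [he, MeasurableEquiv.coe_piCongrLeft]
        exact Equiv.piCongrLeft_apply_apply (fun _ => ℝ) σ y i
      by_cases hSM : StrictMono y <;>
        simp [Set.indicator_apply, hcomp, hSM]
    rw [Finset.sum_congr rfl (fun σ _ => hterm σ), Finset.sum_const, Finset.card_univ,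
      Fintype.card_perm, Fintype.card_fin, nsmul_eq_mul]
  · intro σ _
    exact Measurable.indicator ((measurable_core m k a).comp (measurable_precomp m σ))
      ((measurableSet_strictMono m).preimage (measurable_precomp m σ))


lemma hfun_eq_of_injective (m k : ℕ) (a : ℝ) (x : Fin m → ℝ) (hx : Function.Injective x) :
    hfun m k a x = core m k a (x ∘ Tuple.sort x) := by
  unfold hfun
  rw [Finset.sum_eq_single (Tuple.sort x)]
  · have hSM : StrictMono (x ∘ Tuple.sort x) :=
      (Tuple.monotone_sort x).strictMono_of_injective (hx.comp (Equiv.injective _))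
    exact Set.indicator_of_mem hSM _
  · intro τ _ hτ
    apply Set.indicator_of_notMem
    intro hSM
    apply hτ
    have h1 : x ∘ τ = x ∘ Tuple.sort x :=
      Tuple.comp_sort_eq_comp_iff_monotone.mpr hSM.monotone
    exact Equiv.ext fun i => hx (congrFun h1 i)
  · intro hmem; exact absurd (Finset.mem_univ _) hmem

lemma core_val (m k : ℕ) (hkm : k ≤ m) (a : ℝ) (u : Fin m → ℝ)
    (hu : ∀ i, 0 < u i) :
    core m k a u =
      ENNReal.ofReal (Real.exp (∑ j : Fin k, (-a) * Real.log (u (Fin.castLE hkm j)))) := by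
  unfold core
  have h1 : ∀ i : Fin m, ENNReal.ofReal (u i) ^ (wt k a i.val) =
      ENNReal.ofReal ((u i) ^ (wt k a i.val)) := fun i =>
    ENNReal.ofReal_rpow_of_pos (hu i)
  rw [Finset.prod_congr rfl fun i _ => h1 i,
    ← ENNReal.ofReal_prod_of_nonneg (fun i _ => Real.rpow_nonneg (hu i).le _)]
  congr 1
  have h2 : ∏ i : Fin m, (u i) ^ (wt k a i.val) =
      ∏ i ∈ Finset.univ.filter (fun i : Fin m => i.val < k), (u i) ^ (wt k a i.val) := by
    symm
    apply Finset.prod_filter_of_ne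
    intro i _ hne
    by_contra hik
    exact hne (by rw [wt, if_neg hik, Real.rpow_zero])
  have h3 : Finset.univ.filter (fun i : Fin m => i.val < k) =
      (Finset.univ : Finset (Fin k)).map (Fin.castLEEmb hkm) := by
    ext i
    simp only [Finset.mem_filter, Finset.mem_univ, true_and, Finset.mem_map]
    constructor
    · intro hik
      refine ⟨⟨i.val, hik⟩, ?_⟩
      exact Fin.ext (by simp)
    · rintro ⟨j, _, rfl⟩
      simpa using j.isLt
  rw [h2, h3, Finset.prod_map]
  rw [Real.exp_sum]
  apply Finset.prod_congr rfl
  intro j _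
  have hj : ((Fin.castLEEmb hkm) j : Fin m).val < k := by
    simpa using j.isLt
  rw [wt, if_pos hj]
  rw [Real.rpow_def_of_pos (hu _)]
  congr 1
  rw [show ((Fin.castLEEmb hkm) j) = Fin.castLE hkm j from rfl]
  ring


lemma Dden_base (k : ℕ) (a : ℝ) :
    Dden k a k = (1 - a)^k * (Nat.factorial k : ℝ) := by
  unfold Dden
  have h1 : ∀ i ∈ Finset.range k, pexp k a (i+1) = (1 - a) * ((i:ℝ)+1) := by
    intro i hi
    rw [Finset.mem_range] at hi
    unfold pexp
    rw [min_eq_left (by omega)]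
    push_cast
    ring
  rw [Finset.prod_congr rfl h1, Finset.prod_mul_distrib, Finset.prod_const, Finset.card_range]
  congr 1
  exact_mod_cast Finset.prod_range_add_one_eq_factorial k

lemma Dden_eval (k : ℕ) (hk : 1 ≤ k) (lam : ℝ) (hlam0 : 0 < lam) (hlamk : lam < (k:ℝ)) :
    ∀ r, k ≤ r → Dden k (lam / k) r =
      (1 - lam / k)^k * (Nat.factorial k : ℝ) *
        (Real.Gamma ((r:ℝ)+1-lam) / Real.Gamma ((k:ℝ)+1-lam)) := by
  have hk0 : (0:ℝ) < k := by exact_mod_cast hk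
  have hG : 0 < Real.Gamma ((k:ℝ)+1-lam) := Real.Gamma_pos_of_pos (by linarith)
  intro r hr
  induction r, hr using Nat.le_induction with
  | base =>
    rw [Dden_base, div_self hG.ne']
    ring
  | succ r hr ih =>
    specialize ih
    have hD1 : Dden k (lam/k) (r+1) = Dden k (lam/k) r * pexp k (lam/k) (r+1) :=
      Finset.prod_range_succ _ _
    have hp : pexp k (lam/k) (r+1) = ((r:ℝ)+1) - lam := by
      unfold pexp
      rw [min_eq_right (by omega)]
      push_cast
      field_simp
    have hGpos : (0:ℝ) < (r:ℝ) + 1 - lam := by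
      have : (k:ℝ) ≤ (r:ℝ) := by exact_mod_cast hr
      linarith
    have hGrec : Real.Gamma (((r:ℝ)+1)+1-lam) = ((r:ℝ)+1-lam) * Real.Gamma ((r:ℝ)+1-lam) := by
      have : ((r:ℝ)+1)+1-lam = ((r:ℝ)+1-lam) + 1 := by ring
      rw [this, Real.Gamma_add_one hGpos.ne']
    rw [hD1, ih, hp]
    push_cast
    rw [hGrec]
    ring

lemma final_value (n k : ℕ) (hk : 1 ≤ k) (hkn : k ≤ n - 1) (hn : 2 ≤ n) (lam : ℝ)
    (hlam0 : 0 < lam) (hlamk : lam < (k:ℝ)) :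
    (Nat.factorial (n-1) : ℝ) / Dden k (lam/k) (n-1) =
      1 / (1 - lam / k) ^ (k - 1) *
        (Real.Gamma n * Real.Gamma ((k:ℝ) - lam) / (Real.Gamma ((n:ℝ) - lam) * Real.Gamma k)) := by
  have hk0 : (0:ℝ) < k := by exact_mod_cast hk
  have ha1 : lam / k < 1 := (div_lt_one hk0).mpr hlamk
  have ha0 : 0 < lam / k := div_pos hlam0 hk0
  have hcast1 : ((n-1 : ℕ) : ℝ) = (n:ℝ) - 1 := by
    push_cast [Nat.cast_sub (by omega : 1 ≤ n)]
    ring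
  have hcastk : ((k-1 : ℕ) : ℝ) = (k:ℝ) - 1 := by
    push_cast [Nat.cast_sub hk]
    ring
  rw [Dden_eval k hk lam hlam0 hlamk (n-1) hkn]
  have hGn : Real.Gamma (n:ℝ) = (Nat.factorial (n-1) : ℝ) := by
    rw [show ((n:ℝ)) = ((n-1:ℕ):ℝ) + 1 by rw [hcast1]; ring]
    exact Real.Gamma_nat_eq_factorial (n-1)
  have hGk : Real.Gamma (k:ℝ) = (Nat.factorial (k-1) : ℝ) := by
    rw [show ((k:ℝ)) = ((k-1:ℕ):ℝ) + 1 by rw [hcastk]; ring]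
    exact Real.Gamma_nat_eq_factorial (k-1)
  have hkfact : (Nat.factorial k : ℝ) = (k:ℝ) * (Nat.factorial (k-1) : ℝ) := by
    have h0 : k.factorial = k * (k-1).factorial := by
      conv_lhs => rw [show k = (k-1)+1 by omega]
      rw [Nat.factorial_succ, show (k-1)+1 = k by omega]
    rw [h0]
    push_cast
    ring
  have hGkl : Real.Gamma ((k:ℝ)+1-lam) = ((k:ℝ)-lam) * Real.Gamma ((k:ℝ)-lam) := by
    rw [show (k:ℝ)+1-lam = ((k:ℝ)-lam)+1 by ring, Real.Gamma_add_one (by linarith)]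
  have hGnl : Real.Gamma (((n-1:ℕ):ℝ)+1-lam) = Real.Gamma ((n:ℝ)-lam) := by
    rw [hcast1]
    ring_nf
  have hkk : (1 - lam/k)^k = (1 - lam/k)^(k-1) * (1 - lam/k) := by
    rw [← pow_succ, show (k-1)+1 = k by omega]
  have hklam : (k:ℝ) - lam = (k:ℝ) * (1 - lam/k) := by
    field_simp
  have hGnlpos : 0 < Real.Gamma ((n:ℝ)-lam) := by
    apply Real.Gamma_pos_of_pos
    have h1 : (k:ℝ) ≤ (n:ℝ) - 1 := by
      rw [← hcast1]
      exact_mod_cast hkn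
    linarith
  have hGklpos : 0 < Real.Gamma ((k:ℝ)-lam) := Real.Gamma_pos_of_pos (by linarith)
  rw [hGn, hGk, hGnl, hGkl, hkfact, hkk, hklam]
  have h1a : (0:ℝ) < 1 - lam/k := by linarith
  have hfpos : (0:ℝ) < (Nat.factorial (k-1) : ℝ) := by exact_mod_cast Nat.factorial_pos _
  have hfnpos : (0:ℝ) < (Nat.factorial (n-1) : ℝ) := by exact_mod_cast Nat.factorial_pos _
  generalize hc : 1 - lam/(k:ℝ) = c at h1a ⊢
  field_simp



lemma list_eq_sort {m : ℕ} (x : Fin m → ℝ) (σ : Equiv.Perm (Fin m))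
    (h : Monotone (x ∘ σ)) :
    Multiset.sort (Multiset.map x Finset.univ.val) (· ≤ ·) = List.ofFn (x ∘ σ) := by
  have hp : List.Perm (Multiset.sort (Multiset.map x Finset.univ.val) (· ≤ ·))
      (List.ofFn (x ∘ σ)) := by
    apply Multiset.coe_eq_coe.mp
    rw [Multiset.sort_eq]
    have h1 : (List.ofFn (x ∘ σ) : Multiset ℝ) = Multiset.map (x ∘ σ) Finset.univ.val := by
      rw [List.ofFn_eq_map]
      rfl
    rw [h1, ← Multiset.map_map]
    congr 1
    have h2 : Multiset.map (σ : Fin m → Fin m) Finset.univ.val =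
        (Finset.univ.map σ.toEmbedding).val := rfl
    rw [h2, Finset.map_univ_equiv]
  exact List.Perm.eq_of_pairwise' (Multiset.pairwise_sort ..)
    (by rw [← List.sortedLE_iff_pairwise, List.sortedLE_ofFn_iff]; exact h) hp

lemma orderStat_eq {m : ℕ} (x : Fin m → ℝ) (σ : Equiv.Perm (Fin m))
    (h : Monotone (x ∘ σ)) (j : Fin m) : orderStat x j = x (σ j) := by
  have hl := list_eq_sort x σ h
  unfold orderStat
  have hlen : (Multiset.sort (Multiset.map x Finset.univ.val) (· ≤ ·)).length = m := by simp
  rw [List.get_of_eq hl]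
  simp


lemma null_noninj' (m : ℕ) (hm : 1 ≤ m) :
    (Measure.pi fun _ : Fin m => mu1) {x | ¬ Function.Injective x} = 0 := by
  obtain ⟨r, rfl⟩ := Nat.exists_eq_succ_of_ne_zero (by omega : m ≠ 0)
  exact null_noninj r

end S13
end Aux

/-- Chernoff bound for the log-sum of the `k` smallest order statistics of
`n-1` i.i.d. uniform-[0,1] variables: for `0 < λ < k` and `S > 0`,
`P{(1/k)∑ log(1/U_j) > S} ≤ e^{-λS}/(1-λ/k)^{k-1} · Γ(n)Γ(k-λ)/(Γ(n-λ)Γ(k))`. -/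
theorem stmt_13 (n k : ℕ) (hk : 1 ≤ k) (hkn : k ≤ n - 1) (hn : 2 ≤ n)
    (lam S : ℝ) (hlam0 : 0 < lam) (hlamk : lam < k) (hS : 0 < S) :
    (Measure.pi fun _ : Fin (n - 1) => volume.restrict (Set.Icc (0:ℝ) 1))
      {x | S < (1 / (k : ℝ)) *
        ∑ j : Fin k, Real.log (1 / orderStat x (Fin.castLE hkn j))}
    ≤ ENNReal.ofReal (Real.exp (-lam * S) / (1 - lam / k) ^ (k - 1) *
        (Real.Gamma n * Real.Gamma (k - lam) / (Real.Gamma (n - lam) * Real.Gamma k))) := by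
  classical
  have hm1 : 1 ≤ n - 1 := le_trans hk hkn
  have hk0 : (0:ℝ) < k := by exact_mod_cast hk
  set m := n - 1 with hmdef
  set a : ℝ := lam / k with hadef
  have ha0 : 0 < a := div_pos hlam0 hk0
  have ha1 : a < 1 := (div_lt_one hk0).mpr hlamk
  have hμ : (Measure.pi fun _ : Fin m => volume.restrict (Set.Icc (0:ℝ) 1)) =
      (Measure.pi fun _ : Fin m => S13.mu1) := rfl
  rw [hμ]
  set μ := Measure.pi fun _ : Fin m => S13.mu1 with hμdef
  set ε := ENNReal.ofReal (Real.exp (lam * S)) with hεdef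
  have hε0 : ε ≠ 0 := by
    rw [hεdef]
    exact (ENNReal.ofReal_pos.mpr (Real.exp_pos _)).ne'
  have hεtop : ε ≠ ⊤ := ENNReal.ofReal_ne_top
  have hsub : {x : Fin m → ℝ | S < (1 / (k:ℝ)) *
        ∑ j : Fin k, Real.log (1 / orderStat x (Fin.castLE hkn j))}
      ⊆ {x | ε ≤ S13.hfun m k a x} ∪
        ({x | ¬ Function.Injective x} ∪ {x | ∃ i, x i ∉ Set.Ioo (0:ℝ) 1}) := by
    intro x hx
    by_cases hinj : Function.Injective x
    · by_cases hio : ∀ i, x i ∈ Set.Ioo (0:ℝ) 1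
      · left
        set σ := Tuple.sort x with hσ
        have hmono : Monotone (x ∘ σ) := Tuple.monotone_sort x
        have hord : ∀ j : Fin m, orderStat x j = x (σ j) := S13.orderStat_eq x σ hmono
        have hupos : ∀ i, 0 < (x ∘ σ) i := fun i => (hio (σ i)).1
        have h1 : S13.hfun m k a x = S13.core m k a (x ∘ σ) :=
          S13.hfun_eq_of_injective m k a x hinj
        show ε ≤ S13.hfun m k a x
        rw [h1, S13.core_val m k hkn a (x ∘ σ) hupos]
        have hsum : (∑ j : Fin k, (-a) * Real.log ((x ∘ σ) (Fin.castLE hkn j))) =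
            lam * ((1 / (k:ℝ)) * ∑ j : Fin k, Real.log (1 / orderStat x (Fin.castLE hkn j))) := by
          have hterm : ∀ j : Fin k, (-a) * Real.log ((x ∘ σ) (Fin.castLE hkn j)) =
              a * Real.log (1 / orderStat x (Fin.castLE hkn j)) := by
            intro j
            rw [one_div, Real.log_inv, hord (Fin.castLE hkn j)]
            simp only [Function.comp_apply]
            ring
          rw [Finset.sum_congr rfl (fun j _ => hterm j), ← Finset.mul_sum, hadef]
          field_simp
        rw [hsum, hεdef]
        apply ENNReal.ofReal_le_ofReal
        apply Real.exp_le_exp.mpr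
        have hxlt : S < (1 / (k:ℝ)) *
            ∑ j : Fin k, Real.log (1 / orderStat x (Fin.castLE hkn j)) := hx
        nlinarith
      · right; right
        push_neg at hio
        exact hio
    · right; left
      exact hinj
  have hnull : μ ({x : Fin m → ℝ | ¬ Function.Injective x} ∪
      {x | ∃ i, x i ∉ Set.Ioo (0:ℝ) 1}) = 0 :=
    measure_union_null (S13.null_noninj' m hm1) (S13.null_notIoo m)
  have hval : ∫⁻ x, S13.hfun m k a x ∂μ =
      ENNReal.ofReal ((Nat.factorial m : ℝ) / S13.Dden k a m) := by
    rw [S13.lintegral_hfun m k a, S13.Fint_eval k a ha0 ha1 m 1 one_pos le_rfl,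
      Real.one_rpow, ← ENNReal.ofReal_natCast (Nat.factorial m),
      ← ENNReal.ofReal_mul (by positivity)]
    rw [mul_one_div]
  have hmar : ε * μ {x | ε ≤ S13.hfun m k a x} ≤
      ENNReal.ofReal ((Nat.factorial m : ℝ) / S13.Dden k a m) := by
    rw [← hval]
    exact mul_meas_ge_le_lintegral (S13.measurable_hfun m k a) ε
  calc μ {x : Fin m → ℝ | S < (1 / (k:ℝ)) *
        ∑ j : Fin k, Real.log (1 / orderStat x (Fin.castLE hkn j))}
      ≤ μ ({x | ε ≤ S13.hfun m k a x} ∪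
        ({x | ¬ Function.Injective x} ∪ {x | ∃ i, x i ∉ Set.Ioo (0:ℝ) 1})) := measure_mono hsub
    _ ≤ μ {x | ε ≤ S13.hfun m k a x} + μ ({x : Fin m → ℝ | ¬ Function.Injective x} ∪
        {x | ∃ i, x i ∉ Set.Ioo (0:ℝ) 1}) := measure_union_le _ _
    _ = μ {x | ε ≤ S13.hfun m k a x} := by rw [hnull, add_zero]
    _ ≤ ENNReal.ofReal ((Nat.factorial m : ℝ) / S13.Dden k a m) / ε := by
        apply (ENNReal.le_div_iff_mul_le (Or.inl hε0) (Or.inl hεtop)).mpr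
        rw [mul_comm]
        exact hmar
    _ = ENNReal.ofReal (((Nat.factorial m : ℝ) / S13.Dden k a m) / Real.exp (lam * S)) := by
        rw [hεdef, ENNReal.ofReal_div_of_pos (Real.exp_pos _)]
    _ = ENNReal.ofReal (Real.exp (-lam * S) / (1 - lam / k) ^ (k - 1) *
        (Real.Gamma n * Real.Gamma (k - lam) / (Real.Gamma (n - lam) * Real.Gamma k))) := by
        congr 1
        rw [hadef, S13.final_value n k hk hkn hn lam hlam0 hlamk, neg_mul, Real.exp_neg]
        ring
end

section
/- Fix an integer k ≥ 1 and a real ν ≥ 1, and set γ_j := (1-(j-1)/k)^ν - (1-j/k)^ν for j = 1,...,k. Then γ_j > 0, ∑_{j=1}^k γ_j = 1, and for all 0 ≤ u_1 ≤ ... ≤ u_k ≤ 1, ((1/k)∑_{j=1}^k u_j^{1/ν})^ν ≥ ∑_{j=1}^k γ_j u_j. -/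
open Finset

/-- convexity shift inequality for `x ↦ x^ν`, `ν ≥ 1`:
`(x+g)^ν - x^ν ≤ (y+g)^ν - y^ν` for `0 ≤ x ≤ y`, `0 ≤ g`. -/
lemma convex_shift (ν x y g : ℝ) (hν : 1 ≤ ν) (hx : 0 ≤ x) (hxy : x ≤ y) (hg : 0 ≤ g) :
    (x + g) ^ ν - x ^ ν ≤ (y + g) ^ ν - y ^ ν := by
  rcases eq_or_lt_of_le (by linarith : (0:ℝ) ≤ y - x + g) with hd | hd
  · have hyx : y = x := by linarith
    have hg0 : g = 0 := by linarith
    simp [hyx, hg0]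
  · set d := y - x + g with hd_def
    set lam := (y - x) / d with hlam_def
    have hmu : g / d = 1 - lam := by
      field_simp [hlam_def]
      have hl : lam * d = y - x := by
        rw [hlam_def]; field_simp
      linarith [hl, hd_def]
    have hlam0 : 0 ≤ lam := div_nonneg (by linarith) (le_of_lt hd)
    have hlam1 : lam ≤ 1 := by
      rw [hlam_def, div_le_one hd]; linarith
    have hcx : ConvexOn ℝ (Set.Ici 0) fun t : ℝ => t ^ ν := convexOn_rpow hν
    have hxm : x ∈ Set.Ici (0:ℝ) := hx
    have hym : (y + g) ∈ Set.Ici (0:ℝ) := by simp; linarith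
    have hb1 := hcx.2 hxm hym hlam0 (by linarith : (0:ℝ) ≤ 1 - lam) (by ring)
    have hb2 := hcx.2 hxm hym (by linarith : (0:ℝ) ≤ 1 - lam) hlam0 (by ring)
    simp only [smul_eq_mul] at hb1 hb2
    have e1 : lam * x + (1 - lam) * (y + g) = x + g := by
      have : lam * d = y - x := by
        rw [hlam_def]; field_simp
      rw [hd_def] at this; nlinarith [this]
    have e2 : (1 - lam) * x + lam * (y + g) = y := by
      have : lam * d = y - x := by
        rw [hlam_def]; field_simp
      rw [hd_def] at this; nlinarith [this]
    rw [e1] at hb1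
    rw [e2] at hb2
    linarith

/-- previous value, with `pprev v 0 = 0` -/
def pprev (v : ℕ → ℝ) : ℕ → ℝ
  | 0 => 0
  | (i+1) => v i

lemma abel_id (a f : ℕ → ℝ) (n : ℕ) :
    ∑ i ∈ range n, a i * (f i - pprev f i)
      = ∑ i ∈ range n, (a i - a (i+1)) * f i + a n * pprev f n := by
  induction n with
  | zero => simp [pprev]
  | succ n ih =>
    rw [sum_range_succ, sum_range_succ, ih]
    simp only [pprev]
    ring

lemma prev_bound (a v : ℕ → ℝ) (ha : ∀ i, 0 ≤ a i) (hadec : ∀ i, a (i+1) ≤ a i)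
    (hv : ∀ i, 0 ≤ v i) (hm : ∀ i, pprev v i ≤ v i) (n : ℕ) :
    a n * pprev v n ≤ ∑ i ∈ range n, a i * (v i - pprev v i) := by
  induction n with
  | zero => simp [pprev]
  | succ n ih =>
    rw [sum_range_succ]
    have h1 : a (n+1) * pprev v (n+1) ≤ a n * v n := by
      show a (n+1) * v n ≤ a n * v n
      exact mul_le_mul_of_nonneg_right (hadec n) (hv n)
    have : a n * v n = a n * pprev v n + a n * (v n - pprev v n) := by ring
    linarith [ih]

lemma key (ν : ℝ) (hν : 1 ≤ ν) (a v : ℕ → ℝ) (ha : ∀ i, 0 ≤ a i)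
    (hadec : ∀ i, a (i+1) ≤ a i) (hv : ∀ i, 0 ≤ v i)
    (hm : ∀ i, pprev v i ≤ v i) (n : ℕ) :
    ∑ i ∈ range n, a i ^ ν * (v i ^ ν - (pprev v i) ^ ν)
      ≤ (∑ i ∈ range n, a i * (v i - pprev v i)) ^ ν := by
  have hν0 : 0 < ν := lt_of_lt_of_le one_pos hν
  have hp : ∀ i, 0 ≤ pprev v i := by
    intro i; cases i with
    | zero => exact le_refl 0
    | succ j => exact hv j
  induction n with
  | zero => simp [Real.zero_rpow (ne_of_gt hν0)]
  | succ n ih =>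
    rw [sum_range_succ, sum_range_succ]
    set P := ∑ i ∈ range n, a i * (v i - pprev v i) with hP
    set x := a n * pprev v n with hx_def
    set g := a n * (v n - pprev v n) with hg_def
    have hx0 : 0 ≤ x := mul_nonneg (ha n) (hp n)
    have hg0 : 0 ≤ g := mul_nonneg (ha n) (sub_nonneg.2 (hm n))
    have hxP : x ≤ P := prev_bound a v ha hadec hv hm n
    have hterm : a n ^ ν * (v n ^ ν - pprev v n ^ ν) = (x + g) ^ ν - x ^ ν := by
      rw [hx_def, hg_def,
        show a n * pprev v n + a n * (v n - pprev v n) = a n * v n by ring,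
        Real.mul_rpow (ha n) (hv n), Real.mul_rpow (ha n) (hp n)]
      ring
    have hshift := convex_shift ν x P g hν hx0 hxP hg0
    have := add_le_add ih hshift
    rw [hterm]
    linarith


/-- With `γ_j := (1-(j-1)/k)^ν - (1-j/k)^ν` for `j = 1,…,k` (here indexed by
`i = j-1 : Fin k`), real `ν ≥ 1`: each `γ_j > 0`, `∑ γ_j = 1`, and for all
`0 ≤ u_1 ≤ … ≤ u_k ≤ 1`, `((1/k)∑ u_j^{1/ν})^ν ≥ ∑ γ_j u_j`. -/
theorem stmt_19 (k : ℕ) (hk : 1 ≤ k) (ν : ℝ) (hν : 1 ≤ ν)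
    (u : Fin k → ℝ) (h0 : ∀ i, 0 ≤ u i) (h1 : ∀ i, u i ≤ 1) (hm : Monotone u) :
    (∀ i : Fin k, 0 < (1 - (i : ℝ) / k) ^ ν - (1 - ((i : ℝ) + 1) / k) ^ ν) ∧
    (∑ i : Fin k, ((1 - (i : ℝ) / k) ^ ν - (1 - ((i : ℝ) + 1) / k) ^ ν)) = 1 ∧
    ∑ i : Fin k, ((1 - (i : ℝ) / k) ^ ν - (1 - ((i : ℝ) + 1) / k) ^ ν) * u i
      ≤ ((1 / (k : ℝ)) * ∑ i : Fin k, u i ^ (1 / ν)) ^ ν := by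
  have hν0 : 0 < ν := lt_of_lt_of_le one_pos hν
  have hk0 : (0:ℝ) < k := by exact_mod_cast hk
  set a : ℕ → ℝ := fun i => ((k - i : ℕ) : ℝ) / k with ha_def
  have ha_nonneg : ∀ i, 0 ≤ a i := fun i => by positivity
  have ha_dec : ∀ i, a (i+1) ≤ a i := by
    intro i
    simp only [ha_def]
    gcongr
    omega
  have ha_eq : ∀ i ≤ k, a i = 1 - (i:ℝ)/k := by
    intro i hi
    simp only [ha_def]
    rw [Nat.cast_sub hi]
    field_simp
  set U : ℕ → ℝ := fun n => if h : n < k then u ⟨n, h⟩ else 1 with hU_def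
  have hU0 : ∀ n, 0 ≤ U n := by
    intro n; simp only [hU_def]; split
    · exact h0 _
    · exact zero_le_one
  have hUmono : ∀ n, U n ≤ U (n+1) := by
    intro n
    simp only [hU_def]
    rcases lt_or_ge (n+1) k with h | h
    · rw [dif_pos h, dif_pos (Nat.lt_of_succ_lt h)]
      exact hm (by simp [Fin.mk_le_mk])
    · rw [dif_neg (show ¬ (n+1 < k) by omega)]
      split
      · exact h1 _
      · exact le_refl 1
  set v : ℕ → ℝ := fun n => U n ^ (1/ν) with hv_def
  have hv0 : ∀ n, 0 ≤ v n := fun n => Real.rpow_nonneg (hU0 n) _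
  have hvpow : ∀ n, v n ^ ν = U n := by
    intro n
    rw [hv_def]
    show (U n ^ (1/ν)) ^ ν = U n
    rw [← Real.rpow_mul (hU0 n), one_div, inv_mul_cancel₀ (ne_of_gt hν0), Real.rpow_one]
  have hvm : ∀ n, pprev v n ≤ v n := by
    intro n; cases n with
    | zero => exact hv0 0
    | succ j =>
      show v j ≤ v (j+1)
      exact Real.rpow_le_rpow (hU0 j) (hUmono j) (by positivity)
  refine ⟨?_, ?_, ?_⟩
  · intro i
    have hik : (i : ℕ) < k := i.isLt
    apply sub_pos.2
    apply Real.rpow_lt_rpow ?_ ?_ hν0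
    · have : ((i:ℝ) + 1) ≤ k := by exact_mod_cast hik
      rw [sub_nonneg, div_le_one hk0]; exact this
    · rw [sub_lt_sub_iff_left, div_lt_div_iff_of_pos_right hk0]; linarith
  · rw [Fin.sum_univ_eq_sum_range (fun i => ((1 - (i:ℝ) / k) ^ ν - (1 - ((i:ℝ) + 1) / k) ^ ν))]
    have hcg : ∀ i ∈ range k, (1 - (i : ℝ) / k) ^ ν - (1 - ((i : ℝ) + 1) / k) ^ ν
        = (fun j : ℕ => (1 - (j:ℝ)/k) ^ ν) i - (fun j : ℕ => (1 - (j:ℝ)/k) ^ ν) (i+1) := by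
      intro i _
      simp only
      push_cast
      ring_nf
    rw [Finset.sum_congr rfl hcg, Finset.sum_range_sub' (fun j : ℕ => (1 - (j:ℝ)/k) ^ ν)]
    simp [div_self (ne_of_gt hk0), Real.zero_rpow (ne_of_gt hν0), Real.one_rpow]
  · have hpf : ∀ i, pprev (fun j => v j ^ ν) i = (pprev v i) ^ ν := by
      intro i; cases i with
      | zero => simp [pprev, Real.zero_rpow (ne_of_gt hν0)]
      | succ j => rfl
    have hak : a k = 0 := by simp [ha_def]
    have hγ : ∑ i : Fin k, ((1 - (i : ℝ) / k) ^ ν - (1 - ((i : ℝ) + 1) / k) ^ ν) * u i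
        = ∑ i ∈ range k, ((a i ^ ν - a (i+1) ^ ν) * v i ^ ν) := by
      rw [← Fin.sum_univ_eq_sum_range (fun n => (a n ^ ν - a (n+1) ^ ν) * v n ^ ν) k]
      apply Finset.sum_congr rfl
      intro i _
      have hi : (i:ℕ) < k := i.isLt
      have e1 : a (i:ℕ) = 1 - ((i:ℕ):ℝ)/k := ha_eq _ (le_of_lt hi)
      have e2 : a ((i:ℕ)+1) = 1 - (((i:ℕ):ℝ)+1)/k := by
        rw [ha_eq _ hi]; push_cast; ring
      have e3 : v (i:ℕ) ^ ν = u i := by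
        rw [hvpow]
        simp only [hU_def]
        rw [dif_pos hi]
      rw [e1, e2, e3]
    have habel := abel_id (fun i => a i ^ ν) (fun i => v i ^ ν) k
    simp only [hpf, hak, Real.zero_rpow (ne_of_gt hν0), zero_mul, add_zero] at habel
    have hT : ∑ i ∈ range k, ((a i ^ ν - a (i+1) ^ ν) * v i ^ ν)
        = ∑ i ∈ range k, a i ^ ν * (v i ^ ν - (pprev v i) ^ ν) := habel.symm
    have hS : ∑ i ∈ range k, a i * (v i - pprev v i)
        = (1 / (k : ℝ)) * ∑ i : Fin k, u i ^ (1 / ν) := by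
      rw [abel_id a v k, hak, zero_mul, add_zero]
      have hstep : ∀ i ∈ range k, (a i - a (i+1)) * v i = (1/(k:ℝ)) * v i := by
        intro i hi
        rw [Finset.mem_range] at hi
        rw [ha_eq i (le_of_lt hi), ha_eq (i+1) hi]
        push_cast
        field_simp
        ring
      rw [Finset.sum_congr rfl hstep, ← Finset.mul_sum]
      congr 1
      rw [← Fin.sum_univ_eq_sum_range v k]
      apply Finset.sum_congr rfl
      intro i _
      simp only [hv_def, hU_def]
      rw [dif_pos i.isLt]
    calc ∑ i : Fin k, ((1 - (i : ℝ) / k) ^ ν - (1 - ((i : ℝ) + 1) / k) ^ ν) * u i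
        = ∑ i ∈ range k, a i ^ ν * (v i ^ ν - (pprev v i) ^ ν) := by rw [hγ, hT]
      _ ≤ (∑ i ∈ range k, a i * (v i - pprev v i)) ^ ν :=
          key ν hν a v ha_nonneg ha_dec hv0 hvm k
      _ = _ := by rw [hS]
end
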